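/- arXiv:2303.07854 — 2 statements merged into one kernel-verified Lean document; each statement's English description precedes it below -/
import Mathlib

section
/- For integers 0 ≤ s* ≤ s ≤ p with S ⊇ S* interpreted combinatorially: C(p, s*) · C(p - s*, p - s) / C(p, s) ≤ s^{s - s*}. -/
theorem choose_ratio_superset_bound
    (p s sstar : ℕ) (h1 : sstar ≤ s) (h2 : s ≤ p) :
    (Nat.choose p sstar : ℝ) * Nat.choose (p - sstar) (p - s) / Nat.choose p s ≤
      (s : ℝ) ^ (s - sstar) := by
  have hsym : (p - sstar).choose (p - s) = (p - sstar).choose (s - sstar) := by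
    have h : s - sstar ≤ p - sstar := Nat.sub_le_sub_right h2 _
    have : (p - sstar) - (s - sstar) = p - s := by omega
    rw [← Nat.choose_symm h, this]
  have hkey : p.choose sstar * (p - sstar).choose (s - sstar) =
      p.choose s * s.choose sstar := (Nat.choose_mul (n := p) h1).symm
  have hpos : (0:ℝ) < p.choose s := by
    exact_mod_cast Nat.choose_pos h2
  rw [hsym, div_le_iff₀ hpos, ← Nat.cast_mul, hkey]
  push_cast
  calc (p.choose s : ℝ) * s.choose sstar ≤ (p.choose s : ℝ) * s ^ (s - sstar) := by
        gcongr
        exact_mod_cast Nat.choose_symm h1 ▸ Nat.choose_le_pow s (s - sstar)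
      _ = (s:ℝ) ^ (s - sstar) * p.choose s := by ring
end

section
/- For integers 0 ≤ t ≤ s* ≤ p and t ≤ s ≤ p, the binomial coefficients satisfy C(s*, t) · C(p - s*, s - t) · C(p, s*) / C(p, s) ≤ s^{s - t} · p^{s* - t}. -/
lemma choose_key_identity
    (p s sstar t : ℕ) (ht1 : t ≤ s) (ht2 : t ≤ sstar) (hs : s ≤ p) (hstar : sstar ≤ p) :
    Nat.choose sstar t * Nat.choose (p - sstar) (s - t) * Nat.choose p sstar
      = Nat.choose s t * Nat.choose (p - s) (sstar - t) * Nat.choose p s := by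
  by_cases hcase : s - t ≤ p - sstar
  · set n := p - t
    set a := sstar - t
    set b := s - t
    have hab : a + b ≤ n := by omega
    have hna : n - a = p - sstar := by omega
    have hnb : n - b = p - s := by omega
    have h1 : p.choose sstar * sstar.choose t = p.choose t * n.choose a :=
      Nat.choose_mul ht2
    have h2 : p.choose s * s.choose t = p.choose t * n.choose b :=
      Nat.choose_mul ht1
    have h3 : n.choose (a + b) * (a + b).choose a = n.choose a * (n - a).choose b := by
      have := Nat.choose_mul (n := n) (Nat.le_add_right a b)
      simpa using this
    have h4 : n.choose (a + b) * (a + b).choose b = n.choose b * (n - b).choose a := by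
      have := Nat.choose_mul (n := n) (Nat.le_add_left b a)
      simpa using this
    have hsymm : (a + b).choose a = (a + b).choose b := Nat.choose_symm_add
    have hmain : p.choose t * (n.choose a * (n - a).choose b)
        = p.choose t * (n.choose b * (n - b).choose a) := by
      rw [← h3, ← h4, hsymm]
    calc sstar.choose t * (p - sstar).choose b * p.choose sstar
        = (p.choose sstar * sstar.choose t) * (p - sstar).choose b := by ring
      _ = p.choose t * n.choose a * (p - sstar).choose b := by rw [h1]
      _ = p.choose t * (n.choose a * (n - a).choose b) := by rw [hna]; ring
      _ = p.choose t * (n.choose b * (n - b).choose a) := hmain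
      _ = (p.choose t * n.choose b) * (n - b).choose a := by ring
      _ = (p.choose s * s.choose t) * (p - s).choose a := by rw [h2, hnb]
      _ = s.choose t * (p - s).choose a * p.choose s := by ring
  · have h1 : (p - sstar).choose (s - t) = 0 := Nat.choose_eq_zero_of_lt (by omega)
    have h2 : (p - s).choose (sstar - t) = 0 := Nat.choose_eq_zero_of_lt (by omega)
    rw [h1, h2]; ring

theorem choose_ratio_general_bound
    (p s sstar t : ℕ) (ht1 : t ≤ s) (ht2 : t ≤ sstar) (hs : s ≤ p) (hstar : sstar ≤ p) :
    (Nat.choose sstar t : ℝ) * Nat.choose (p - sstar) (s - t) * Nat.choose p sstar /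
        Nat.choose p s ≤
      (s : ℝ) ^ (s - t) * (p : ℝ) ^ (sstar - t) := by
  have hps : 0 < (Nat.choose p s : ℝ) := by
    exact_mod_cast Nat.choose_pos hs
  have hkey := choose_key_identity p s sstar t ht1 ht2 hs hstar
  have hcast : (Nat.choose sstar t : ℝ) * Nat.choose (p - sstar) (s - t) * Nat.choose p sstar
      = (Nat.choose s t : ℝ) * Nat.choose (p - s) (sstar - t) * Nat.choose p s := by
    exact_mod_cast congrArg (Nat.cast : ℕ → ℝ) hkey
  rw [hcast, mul_div_assoc, div_self (ne_of_gt hps), mul_one]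
  have hb1 : (Nat.choose s t : ℝ) ≤ (s : ℝ) ^ (s - t) := by
    rw [← Nat.choose_symm ht1]
    exact_mod_cast Nat.choose_le_pow s (s - t)
  have hb2 : (Nat.choose (p - s) (sstar - t) : ℝ) ≤ (p : ℝ) ^ (sstar - t) := by
    calc (Nat.choose (p - s) (sstar - t) : ℝ) ≤ ((p - s : ℕ) : ℝ) ^ (sstar - t) := by
          exact_mod_cast Nat.choose_le_pow (p - s) (sstar - t)
      _ ≤ (p : ℝ) ^ (sstar - t) := by
          apply pow_le_pow_left₀ (by positivity)
          exact_mod_cast Nat.sub_le p s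
  exact mul_le_mul hb1 hb2 (by positivity) (by positivity)
end
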